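/- Let ν be a Borel probability measure on a metric space X. Suppose there is a function o : (0,1) → (0,∞) with o(r) → 0 as r → 0, and for all sufficiently small r > 0 there exists a Borel set Y_r with ν(Y_r) > 0 such that for ν-a.e. x ∈ Y_r, ν(B(x,r))·ν(Y_r) ≥ r^{o(r)}. Then lim_{r→0} (log ∫ ν(B(x,r)) dν(x)) / (log r) = 0, i.e., the correlation dimension of ν is 0. -/

import Mathlib

open MeasureTheory Filter Set Metric
open scoped ENNReal NNReal Topology

lemma measurable_measure_ball' {X : Type*} [MetricSpace X] [MeasurableSpace X]
    [BorelSpace X] (ν : Measure X) (r : ℝ) : Measurable fun x => ν (ball x r) := by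
  apply LowerSemicontinuous.measurable
  intro x c hc
  -- approximate ball x r from inside
  have hmono : Monotone fun n : ℕ => ball x (r - 1 / (n + 1)) := by
    intro m n hmn
    apply ball_subset_ball
    have : (1 : ℝ) / (n + 1) ≤ 1 / (m + 1) := by
      apply one_div_le_one_div_of_le <;> [positivity; exact_mod_cast by omega]
    linarith
  have hun : (⋃ n : ℕ, ball x (r - 1 / (n + 1))) = ball x r := by
    apply Subset.antisymm
    · exact iUnion_subset fun n => ball_subset_ball (sub_le_self _ (by positivity))
    · intro y hy
      rw [mem_ball] at hy
      obtain ⟨n, hn⟩ := exists_nat_one_div_lt (show (0:ℝ) < r - dist y x by linarith)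
      exact mem_iUnion.2 ⟨n, by rw [mem_ball]; push_cast; linarith⟩
  have ht := tendsto_measure_iUnion_atTop (μ := ν) hmono
  rw [hun] at ht
  obtain ⟨n, hn⟩ := (ht.eventually (eventually_gt_nhds hc)).exists
  have hd : 0 < 1 / ((n : ℝ) + 1) := by positivity
  filter_upwards [Metric.ball_mem_nhds x hd] with x' hx'
  refine lt_of_lt_of_le hn (measure_mono fun y hy => ?_)
  rw [mem_ball] at *
  have := dist_triangle y x x'
  rw [dist_comm x' x] at hx'
  linarith

/-- If for all small `r` there is a set `Y_r` of positive measure with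
`ν(B(x,r))·ν(Y_r) ≥ r^{o(r)}` for a.e. `x ∈ Y_r`, where `o(r) → 0`, then the
correlation dimension of `ν` is `0`. -/
theorem correlation_dim_zero_of_thick_sets {X : Type*} [MetricSpace X] [MeasurableSpace X]
    [BorelSpace X] (ν : Measure X) [IsProbabilityMeasure ν]
    (o : ℝ → ℝ) (ho_pos : ∀ r ∈ Set.Ioo (0:ℝ) 1, 0 < o r)
    (ho : Tendsto o (nhdsWithin 0 (Set.Ioi 0)) (nhds 0))
    (h : ∀ᶠ r in nhdsWithin (0:ℝ) (Set.Ioi 0), ∃ Y : Set X, MeasurableSet Y ∧ 0 < ν Y ∧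
      ∀ᵐ x ∂ν, x ∈ Y → r ^ o r ≤ (ν (ball x r)).toReal * (ν Y).toReal) :
    Tendsto (fun r : ℝ => Real.log (∫ x, (ν (ball x r)).toReal ∂ν) / Real.log r)
      (nhdsWithin 0 (Set.Ioi 0)) (nhds 0) := by
  have hsmall : ∀ᶠ r in nhdsWithin (0:ℝ) (Set.Ioi 0), r ∈ Set.Ioo (0:ℝ) 1 := by
    filter_upwards [Ioo_mem_nhdsGT_of_mem (by norm_num : (0:ℝ) ∈ Ico (0:ℝ) 1)] with r hr
    exact hr
  have key : ∀ᶠ r in nhdsWithin (0:ℝ) (Set.Ioi 0),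
      0 ≤ Real.log (∫ x, (ν (ball x r)).toReal ∂ν) / Real.log r ∧
      Real.log (∫ x, (ν (ball x r)).toReal ∂ν) / Real.log r ≤ o r := by
    filter_upwards [h, hsmall] with r ⟨Y, hYm, hYpos, hY⟩ hr
    obtain ⟨hr0, hr1⟩ := hr
    set f : X → ℝ := fun x => (ν (ball x r)).toReal with hf
    have hfm : Measurable f := (measurable_measure_ball' ν r).ennreal_toReal
    have hf1 : ∀ x, f x ≤ 1 := fun x => by
      simpa using ENNReal.toReal_mono (measure_ne_top ν _)
        (measure_mono (subset_univ (ball x r)))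
    have hf0 : ∀ x, 0 ≤ f x := fun x => ENNReal.toReal_nonneg
    have hfi : Integrable f ν := by
      refine ⟨hfm.aestronglyMeasurable, ?_⟩
      apply HasFiniteIntegral.of_bounded (C := 1)
      filter_upwards with x
      rw [Real.norm_eq_abs, abs_of_nonneg (hf0 x)]
      exact hf1 x
    have hYt : 0 < (ν Y).toReal := ENNReal.toReal_pos hYpos.ne' (measure_ne_top ν Y)
    set c : ℝ := r ^ o r / (ν Y).toReal with hc
    have hcpos : 0 < r ^ o r := Real.rpow_pos_of_pos hr0 _
    -- lower bound on the integral
    have hI1 : r ^ o r ≤ ∫ x, f x ∂ν := by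
      have h1 : ∫ x in Y, (fun _ => c) x ∂ν ≤ ∫ x in Y, f x ∂ν := by
        apply integral_mono_ae (integrable_const c) hfi.integrableOn
        show ∀ᵐ x ∂ν.restrict Y, c ≤ f x
        rw [ae_restrict_iff' hYm]
        filter_upwards [hY] with x hx hxY
        rw [hc, div_le_iff₀ hYt]
        exact hx hxY
      rw [setIntegral_const, smul_eq_mul, measureReal_def, hc, mul_div_cancel₀ _ hYt.ne'] at h1
      calc r ^ o r ≤ ∫ x in Y, f x ∂ν := h1
        _ ≤ ∫ x, f x ∂ν := setIntegral_le_integral hfi (by filter_upwards with x using hf0 x)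
    have hIpos : 0 < ∫ x, f x ∂ν := lt_of_lt_of_le hcpos hI1
    have hI2 : ∫ x, f x ∂ν ≤ 1 := by
      calc ∫ x, f x ∂ν ≤ ∫ _x, (1:ℝ) ∂ν := integral_mono hfi (integrable_const 1) hf1
        _ = 1 := by simp
    have hlogr : Real.log r < 0 := Real.log_neg hr0 hr1
    have hlogI : Real.log (∫ x, f x ∂ν) ≤ 0 := Real.log_nonpos hIpos.le hI2
    have hlogI2 : o r * Real.log r ≤ Real.log (∫ x, f x ∂ν) := by
      have := Real.log_le_log hcpos hI1
      rwa [Real.log_rpow hr0] at this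
    constructor
    · rw [← neg_div_neg_eq]; exact div_nonneg (by linarith) (by linarith)
    · rw [div_le_iff_of_neg hlogr]
      exact hlogI2
  exact tendsto_of_tendsto_of_tendsto_of_le_of_le' tendsto_const_nhds ho
    (key.mono fun r hr => hr.1) (key.mono fun r hr => hr.2)
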